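/- arXiv:1807.06578 — 3 statements merged into one kernel-verified Lean document; each statement's English description precedes it below -/
import Mathlib

section
/- Let M be a matroid on a finite linearly ordered set E, and fix a linear order. The number of bases of M with internal activity 1 and external activity 0 equals β(M), the beta invariant of M; in particular this number is independent of the chosen linear order on E. -/
namespace AB
open Set

variable {α : Type*}

/-- A circuit of a matroid: a minimal dependent set. -/
def Circuit (M : Matroid α) (C : Set α) : Prop :=
  M.Dep C ∧ ∀ D, D ⊂ C → M.Indep D

/-- A cocircuit: a circuit of the dual matroid. -/
def Cocircuit (M : Matroid α) (C : Set α) : Prop := Circuit M✶ C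

/-- `b` is internally active for the basis `B`: `b ∈ B` and `b` is the minimum of the
fundamental cocircuit `C*(B;b)`, the unique cocircuit contained in `(M.E \ B) ∪ {b}`. -/
def IntActive [LinearOrder α] (M : Matroid α) (B : Set α) (b : α) : Prop :=
  b ∈ B ∧ ∃ C, Cocircuit M C ∧ C ⊆ (M.E \ B) ∪ {b} ∧ b ∈ C ∧ ∀ x ∈ C, b ≤ x

/-- `e` is externally active for the basis `B`: `e ∈ M.E \ B` and `e` is the minimum of the
fundamental circuit `C(B;e)`, the unique circuit contained in `B ∪ {e}`. -/
def ExtActive [LinearOrder α] (M : Matroid α) (B : Set α) (e : α) : Prop :=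
  e ∈ M.E \ B ∧ ∃ C, Circuit M C ∧ C ⊆ B ∪ {e} ∧ e ∈ C ∧ ∀ x ∈ C, e ≤ x

/-- `Int(B)`, the set of internally active elements of `B`. -/
def IntSet [LinearOrder α] (M : Matroid α) (B : Set α) : Set α := {b | IntActive M B b}

/-- `Ext(B)`, the set of externally active elements of `B`. -/
def ExtSet [LinearOrder α] (M : Matroid α) (B : Set α) : Set α := {e | ExtActive M B e}

end AB

namespace AB
/-- The rank of a set `X` in a matroid `M`: the largest cardinality of an
independent subset of `X`. -/
noncomputable def rank {α : Type*} (M : Matroid α) (X : Set α) : ℕ :=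
  sSup {n : ℕ | ∃ I, I ⊆ X ∧ M.Indep I ∧ I.ncard = n}

/-- Crapo's beta invariant: `β(M) = (-1)^{r(M)} Σ_{A ⊆ E} (-1)^{|A|} r(A)`. -/
noncomputable def beta {α : Type*} [Fintype α] (M : Matroid α) : ℤ :=
  (-1) ^ (rank M M.E) *
    ∑ A ∈ (Finset.univ : Finset α).powerset, (-1) ^ A.card * (rank M ↑A : ℤ)
end AB

namespace CrapoProof

open Set Matroid

attribute [local instance] Classical.propDecidable

variable {α : Type*} [Fintype α] {M : Matroid α} {A B C D I J X : Set α} {b e x y : α}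

lemma exists_circuit_subset_aux (M : Matroid α) :
    ∀ n (X : Set α), X.ncard ≤ n → M.Dep X → ∃ C, C ⊆ X ∧ AB.Circuit M C := by
  intro n
  induction n with
  | zero =>
    intro X hX hdep
    rw [Nat.le_zero, Set.ncard_eq_zero (Set.toFinite X)] at hX
    subst hX
    exact absurd hdep M.empty_indep.not_dep
  | succ n ih =>
    intro X hX hdep
    by_cases h : ∀ D, D ⊂ X → M.Indep D
    · exact ⟨X, Subset.rfl, hdep, h⟩
    · push_neg at h
      obtain ⟨D, hDX, hD⟩ := h
      have hDdep : M.Dep D := ⟨hD, hDX.subset.trans hdep.subset_ground⟩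
      have hcard : D.ncard ≤ n := by
        have := Set.ncard_lt_ncard hDX (Set.toFinite X)
        omega
      obtain ⟨C, hCD, hC⟩ := ih D hcard hDdep
      exact ⟨C, hCD.trans hDX.subset, hC⟩

lemma exists_circuit_subset (hdep : M.Dep X) : ∃ C, C ⊆ X ∧ AB.Circuit M C :=
  exists_circuit_subset_aux M X.ncard X le_rfl hdep

lemma base_of_indep_card (hI : M.Indep I) (hB : M.IsBase B) (h : B.ncard ≤ I.ncard) :
    M.IsBase I := by
  obtain ⟨B', hB', hIB'⟩ := hI.exists_isBase_superset
  have : I = B' :=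
    Set.eq_of_subset_of_ncard_le hIB'
      (by rw [hB'.ncard_eq_ncard_of_isBase hB]; exact h) (Set.toFinite _)
  exact this ▸ hB'

lemma circuit_mem_insert (hC : AB.Circuit M C) (hCs : C ⊆ insert e B) (hB : M.Indep B) :
    e ∈ C := by
  by_contra he
  refine hC.1.not_indep (hB.subset fun x hx => ?_)
  rcases hCs hx with h | h
  · exact absurd (h ▸ hx) he
  · exact h

lemma base_exchange_of_circuit (hB : M.IsBase B) (he : e ∉ B) (hC : AB.Circuit M C)
    (hCs : C ⊆ insert e B) (hbC : b ∈ C) (hbe : b ≠ e) :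
    M.IsBase (insert e (B \ {b})) := by
  have hbB : b ∈ B := by rcases hCs hbC with h | h; exacts [absurd h hbe, h]
  have heC : e ∈ C := circuit_mem_insert hC hCs hB.indep
  have hCb : M.Indep (C \ {b}) := hC.2 _ (Set.sdiff_singleton_ssubset.mpr hbC)
  set I := insert e (B \ {b}) with hIdef
  have hIE : I ⊆ M.E := by
    refine Set.insert_subset (hC.1.subset_ground heC) ((Set.diff_subset).trans hB.subset_ground)
  have hcard : B.ncard ≤ I.ncard := by
    have h1 : I.ncard = (B \ {b}).ncard + 1 := by
      rw [Set.ncard_insert_of_notMem (fun h => he (Set.diff_subset h)) (Set.toFinite _)]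
    have h2 : (B \ {b}).ncard = B.ncard - 1 := Set.ncard_diff_singleton_of_mem hbB
    have h3 : 1 ≤ B.ncard := (Set.ncard_pos (Set.toFinite _)).mpr ⟨b, hbB⟩
    omega
  refine base_of_indep_card ?_ hB hcard
  by_contra hdep
  have hCbI : C \ {b} ⊆ I := by
    intro x hx
    rcases hCs hx.1 with h | h
    · exact h ▸ Set.mem_insert _ _
    · exact Set.mem_insert_of_mem _ ⟨h, hx.2⟩
  obtain ⟨K, hK, hCK⟩ := hCb.subset_isBasis_of_subset hCbI hIE
  have hKI : K ≠ I := fun h => hdep (h ▸ hK.indep)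
  have hKlt : K.encard < I.encard :=
    (Set.toFinite K).encard_lt_encard (ssubset_of_ne_of_subset hKI hK.subset)
  have hIB : I.encard = B.encard := by
    rw [hIdef, Set.encard_insert_of_notMem (fun h => he (Set.diff_subset h)),
      Set.encard_diff_singleton_add_one hbB]
  obtain ⟨z, hz, hzind⟩ := hK.indep.augment hB.indep (hIB ▸ hKlt)
  by_cases hzb : z = b
  · subst hzb
    refine hC.1.not_indep (hzind.subset ?_)
    intro x hx
    by_cases hxz : x = z
    · exact hxz ▸ Set.mem_insert _ _
    · exact Set.mem_insert_of_mem _ (hCK ⟨hx, hxz⟩)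
  · have hzI : z ∈ I := Set.mem_insert_of_mem _ ⟨hz.1, hzb⟩
    have : K = insert z K :=
      hK.eq_of_subset_indep hzind (Set.subset_insert _ _) (Set.insert_subset hzI hK.subset)
    exact hz.2 (this ▸ Set.mem_insert _ _)


-- dual complement lemma
lemma dual_base_compl (hE : M.E = univ) : M✶.IsBase (univ \ B) ↔ M.IsBase B := by
  rw [Matroid.dual_isBase_iff (show univ \ B ⊆ M.E by rw [hE]; exact diff_subset), hE,
    Set.diff_diff_cancel_left (subset_univ B)]

lemma base_compl_dual (hE : M.E = univ) (hB : M.IsBase B) : M✶.IsBase (univ \ B) :=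
  (dual_base_compl hE).mpr hB

lemma cocircuit_not_subset_compl (hE : M.E = univ) (hD : AB.Cocircuit M D) (hB' : M.IsBase B')
    (h : D ⊆ univ \ B') : False :=
  hD.1.not_indep ((base_compl_dual hE hB').indep.subset h)

lemma circuit_not_subset_base (hC : AB.Circuit M C) (hB' : M.IsBase B') (h : C ⊆ B') : False :=
  hC.1.not_indep (hB'.indep.subset h)

lemma exists_fund_circuit (hB : M.IsBase B) (he : e ∉ B) (heE : e ∈ M.E) :
    ∃ C, AB.Circuit M C ∧ C ⊆ insert e B ∧ e ∈ C := by
  obtain ⟨C, hCs, hC⟩ := exists_circuit_subset (hB.insert_dep ⟨heE, he⟩)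
  exact ⟨C, hC, hCs, circuit_mem_insert hC hCs hB.indep⟩

lemma exists_fund_cocircuit (hE : M.E = univ) (hB : M.IsBase B) (hb : b ∈ B) :
    ∃ D, AB.Cocircuit M D ∧ D ⊆ insert b (univ \ B) ∧ b ∈ D := by
  have h1 : M✶.IsBase (univ \ B) := base_compl_dual hE hB
  have h2 : b ∉ univ \ B := fun h => h.2 hb
  have h3 : b ∈ M✶.E := by rw [dual_ground, hE]; trivial
  exact exists_fund_circuit h1 h2 h3

lemma subset_compl_exchange (hD : D ⊆ insert y (univ \ B)) (hx : x ∉ D) :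
    D ⊆ univ \ (insert x (B \ {y})) := by
  intro z hz
  rcases hD hz with h | h
  · subst h
    refine ⟨trivial, ?_⟩
    rintro (h | h)
    · exact hx (h ▸ hz)
    · exact h.2 rfl
  · refine ⟨trivial, ?_⟩
    rintro (h' | h')
    · exact hx (h' ▸ hz)
    · exact h.2 h'.1

lemma mem_cocircuit_of_exchange (hE : M.E = univ) (hD : AB.Cocircuit M D)
    (hDs : D ⊆ insert y (univ \ B)) (hB'' : M.IsBase (insert x (B \ {y}))) : x ∈ D := by
  by_contra hx
  exact cocircuit_not_subset_compl hE hD hB'' (subset_compl_exchange hDs hx)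

lemma base_exchange_of_cocircuit (hE : M.E = univ) (hB : M.IsBase B) (hb : b ∈ B)
    (hD : AB.Cocircuit M D) (hDs : D ⊆ insert b (univ \ B)) (hxD : x ∈ D) (hxb : x ≠ b) :
    M.IsBase (insert x (B \ {b})) := by
  have h1 : M✶.IsBase (univ \ B) := base_compl_dual hE hB
  have h2 : b ∉ univ \ B := fun h => h.2 hb
  have h3 : M✶.IsBase (insert b ((univ \ B) \ {x})) :=
    base_exchange_of_circuit h1 h2 hD hDs hxD hxb
  have hxB : x ∉ B := by
    rcases hDs hxD with h | h
    · exact absurd h hxb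
    · exact h.2
  have hset : univ \ (insert b ((univ \ B) \ {x})) = insert x (B \ {b}) := by
    ext z
    simp only [Set.mem_diff, Set.mem_insert_iff, Set.mem_univ, true_and, not_or, not_and,
      Set.mem_singleton_iff, not_not]
    constructor
    · rintro ⟨hzb, hz⟩
      by_cases hzx : z = x
      · exact Or.inl hzx
      · exact Or.inr ⟨by_contra fun hzB => hzx (hz hzB), hzb⟩
    · rintro (rfl | ⟨hzB, hzb⟩) <;> constructor <;> first | tauto | (intro h; tauto)
  have hset' : univ \ (insert x (B \ {b})) = insert b ((univ \ B) \ {x}) := by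
    rw [← hset, Set.diff_diff_cancel_left (subset_univ _)]
  exact (dual_base_compl hE).mp (hset' ▸ h3)

section Weights
variable [LinearOrder α]

/-- an injective strictly monotone ℕ-ish weight -/
noncomputable def fwt (x : α) : ℤ := ((Finset.univ.filter (fun y => y < x)).card : ℤ)

lemma fwt_nonneg (x : α) : 0 ≤ fwt x := Int.natCast_nonneg _

lemma fwt_le (x : α) : fwt x ≤ (Fintype.card α : ℤ) := by
  unfold fwt
  exact_mod_cast Finset.card_le_card (Finset.filter_subset _ _) |>.trans
    (le_of_eq (Finset.card_univ))

lemma fwt_strictMono : StrictMono (fwt (α := α)) := by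
  intro x y hxy
  unfold fwt
  have hss : Finset.univ.filter (fun z => z < x) ⊂ Finset.univ.filter (fun z => z < y) := by
    refine Finset.ssubset_iff_of_subset ?_ |>.mpr ?_
    · intro z hz
      simp only [Finset.mem_filter, Finset.mem_univ, true_and] at *
      exact hz.trans hxy
    · exact ⟨x, by simp [hxy], by simp⟩
  exact_mod_cast Finset.card_lt_card hss

lemma fwt_lt_iff {x y : α} : fwt x < fwt y ↔ x < y := fwt_strictMono.lt_iff_lt

lemma fwt_inj : Function.Injective (fwt (α := α)) := fwt_strictMono.injective

/-- the mixed weight function for a set `A`. -/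
noncomputable def wA (A : Set α) (x : α) : ℤ :=
  if x ∈ A then - fwt x else 2 * (Fintype.card α + 1) + fwt x

lemma wA_inj (A : Set α) : Function.Injective (wA A) := by
  intro x y h
  unfold wA at h
  have h1 := fwt_nonneg x
  have h2 := fwt_nonneg y
  have h3 := fwt_le x
  have h4 := fwt_le y
  split_ifs at h with hx hy hy
  · exact fwt_inj (by linarith)
  · linarith
  · linarith
  · exact fwt_inj (by linarith)

lemma wA_lt_in_in {A : Set α} {x y : α} (hx : x ∈ A) (hy : y ∈ A) :
    wA A x < wA A y ↔ y < x := by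
  unfold wA; rw [if_pos hx, if_pos hy]
  constructor
  · intro h; exact fwt_lt_iff.mp (by linarith)
  · intro h; have := fwt_lt_iff.mpr h; linarith

lemma wA_lt_out_out {A : Set α} {x y : α} (hx : x ∉ A) (hy : y ∉ A) :
    wA A x < wA A y ↔ x < y := by
  unfold wA; rw [if_neg hx, if_neg hy]
  constructor
  · intro h; exact fwt_lt_iff.mp (by linarith)
  · intro h; have := fwt_lt_iff.mpr h; linarith

lemma wA_lt_in_out {A : Set α} {x y : α} (hx : x ∈ A) (hy : y ∉ A) :
    wA A x < wA A y := by
  unfold wA; rw [if_pos hx, if_neg hy]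
  have h0 := fwt_nonneg x
  have h1 := fwt_nonneg y
  have hc : (0:ℤ) ≤ (Fintype.card α : ℤ) := Int.natCast_nonneg _
  linarith

lemma wA_not_lt_out_in {A : Set α} {x y : α} (hx : x ∉ A) (hy : y ∈ A) :
    ¬ wA A x < wA A y := by
  have := wA_lt_in_out hy hx
  omega

end Weights

section LocOpt

/-- locally optimal (= minimum weight) basis for a weight `w` -/
def LocOpt (M : Matroid α) (w : α → ℤ) (B : Set α) : Prop :=
  M.IsBase B ∧ ∀ b e, b ∈ B → e ∉ B → M.IsBase (insert e (B \ {b})) → w b < w e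

noncomputable def wsum (w : α → ℤ) (B : Set α) : ℤ := ∑ x ∈ B.toFinset, w x

lemma wsum_exchange {w : α → ℤ} (hb : b ∈ B) (he : e ∉ B) :
    wsum w (insert e (B \ {b})) = wsum w B - w b + w e := by
  unfold wsum
  simp only [Set.toFinset_insert, Set.toFinset_diff, Set.toFinset_singleton]
  have h1 : e ∉ B.toFinset \ ({b} : Finset α) := by
    simp only [Finset.mem_sdiff, Set.mem_toFinset, Finset.mem_singleton]
    tauto
  have h2 : ({b} : Finset α) ⊆ B.toFinset := by
    simp only [Finset.singleton_subset_iff, Set.mem_toFinset]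
    exact hb
  rw [Finset.sum_insert h1, Finset.sum_sdiff_eq_sub h2, Finset.sum_singleton]
  ring

lemma exists_locOpt (M : Matroid α) {w : α → ℤ} (hw : Function.Injective w) :
    ∃ B, LocOpt M w B := by
  have hfin : {B : Set α | M.IsBase B}.Finite := Set.toFinite _
  obtain ⟨B₀, hB₀, hmin⟩ := Set.exists_min_image _ (wsum w) hfin M.exists_isBase
  refine ⟨B₀, hB₀, fun b e hb he hB' => ?_⟩
  have h := hmin _ hB'
  rw [wsum_exchange hb he] at h
  have hne : w b ≠ w e := fun hcon => he (hw hcon ▸ hb)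
  omega

lemma locOpt_unique_aux {w : α → ℤ} (h₁ : LocOpt M w B₁) (h₂ : LocOpt M w B₂)
    (hx : x ∈ B₁ \ B₂) (hmax : ∀ y ∈ (B₁ \ B₂) ∪ (B₂ \ B₁), w y ≤ w x) : False := by
  obtain ⟨y, hy, hBy⟩ := h₁.1.exchange h₂.1 hx
  have h1 : w x < w y := h₁.2 x y hx.1 hy.2 hBy
  have h2 : w y ≤ w x := hmax y (Or.inr hy)
  omega

lemma locOpt_unique {w : α → ℤ} (h₁ : LocOpt M w B₁) (h₂ : LocOpt M w B₂) : B₁ = B₂ := by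
  by_contra hne
  have hs : ((B₁ \ B₂) ∪ (B₂ \ B₁)).Nonempty := by
    rw [Set.nonempty_iff_ne_empty]
    intro h
    rw [Set.union_empty_iff] at h
    exact hne (Set.Subset.antisymm (Set.diff_eq_empty.mp h.1) (Set.diff_eq_empty.mp h.2))
  obtain ⟨x, hx, hmax⟩ := Set.exists_max_image _ w (Set.toFinite _) hs
  rcases hx with hx | hx
  · exact locOpt_unique_aux h₁ h₂ hx hmax
  · exact locOpt_unique_aux h₂ h₁ hx (fun y hy => hmax y (Or.symm hy))

end LocOpt

section Partition
variable [LinearOrder α]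

/-- `A` belongs to the activity interval of the basis `B`. -/
def PInt (M : Matroid α) (A B : Set α) : Prop :=
  M.IsBase B ∧ B \ A ⊆ AB.IntSet M B ∧ A \ B ⊆ AB.ExtSet M B

lemma locOpt_pInt (hE : M.E = univ) {A B : Set α} (h : LocOpt M (wA A) B) : PInt M A B := by
  obtain ⟨hB, hopt⟩ := h
  refine ⟨hB, ?_, ?_⟩
  · rintro b ⟨hbB, hbA⟩
    obtain ⟨D, hD, hDs, hbD⟩ := exists_fund_cocircuit hE hB hbB
    refine ⟨hbB, D, hD, by rw [hE, Set.union_singleton]; exact hDs, hbD, ?_⟩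
    intro x hxD
    rcases eq_or_ne x b with rfl | hxb
    · exact le_refl _
    · have hbase := base_exchange_of_cocircuit hE hB hbB hD hDs hxD hxb
      have hxB : x ∉ B := by
        rcases hDs hxD with h | h
        exacts [absurd h hxb, h.2]
      have hw := hopt b x hbB hxB hbase
      by_cases hxA : x ∈ A
      · exact absurd hw (wA_not_lt_out_in hbA hxA)
      · exact le_of_lt ((wA_lt_out_out hbA hxA).mp hw)
  · rintro e ⟨heA, heB⟩
    obtain ⟨C, hC, hCs, heC⟩ := exists_fund_circuit hB heB (by rw [hE]; trivial)
    refine ⟨⟨by rw [hE]; trivial, heB⟩, C, hC, by rw [Set.union_singleton]; exact hCs, heC, ?_⟩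
    intro x hxC
    rcases eq_or_ne x e with rfl | hxe
    · exact le_refl _
    · have hxB : x ∈ B := by
        rcases hCs hxC with h | h
        exacts [absurd h hxe, h]
      have hbase := base_exchange_of_circuit hB heB hC hCs hxC hxe
      have hw := hopt x e hxB heB hbase
      by_cases hxA : x ∈ A
      · exact le_of_lt ((wA_lt_in_in hxA heA).mp hw)
      · exact absurd hw (wA_not_lt_out_in hxA heA)

lemma pInt_locOpt (hE : M.E = univ) {A B : Set α} (h : PInt M A B) : LocOpt M (wA A) B := by
  obtain ⟨hB, hInt, hExt⟩ := h
  refine ⟨hB, fun b e hbB heB hB' => ?_⟩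
  have hbe : b ≠ e := fun hc => heB (hc ▸ hbB)
  have F1 : e ∈ A → e < b := by
    intro heA
    obtain ⟨-, C, hC, hCs, heC, hmin⟩ := hExt ⟨heA, heB⟩
    have hbC : b ∈ C := by
      by_contra hbC
      refine circuit_not_subset_base hC hB' ?_
      intro z hz
      rcases hCs hz with hz' | hz'
      · exact Set.mem_insert_of_mem _ ⟨hz', fun hzb => hbC (hzb ▸ hz)⟩
      · exact hz' ▸ Set.mem_insert _ _
    exact lt_of_le_of_ne (hmin b hbC) hbe.symm
  have F2 : b ∉ A → b < e := by
    intro hbA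
    obtain ⟨-, D, hD, hDs, hbD, hmin⟩ := hInt ⟨hbB, hbA⟩
    have hDs' : D ⊆ insert b (univ \ B) := by
      rw [hE, Set.union_singleton] at hDs; exact hDs
    have heD : e ∈ D := mem_cocircuit_of_exchange hE hD hDs' hB'
    exact lt_of_le_of_ne (hmin e heD) hbe
  by_cases heA : e ∈ A <;> by_cases hbA : b ∈ A
  · exact (wA_lt_in_in hbA heA).mpr (F1 heA)
  · exact absurd (F1 heA) (not_lt.mpr (le_of_lt (F2 hbA)))
  · exact wA_lt_in_out hbA heA
  · exact (wA_lt_out_out hbA heA).mpr (F2 hbA)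

lemma existsUnique_pInt (hE : M.E = univ) (A : Set α) : ∃! B : Set α, PInt M A B := by
  obtain ⟨B, hB⟩ := exists_locOpt M (wA_inj A)
  exact ⟨B, locOpt_pInt hE hB, fun B' hB' => locOpt_unique (pInt_locOpt hE hB') hB⟩

end Partition

section Rank

lemma rank_eq_ncard {I X : Set α} (hIX : I ⊆ X) (hI : M.Indep I)
    (hmax : ∀ J, J ⊆ X → M.Indep J → J.ncard ≤ I.ncard) : AB.rank M X = I.ncard := by
  unfold AB.rank
  have hbdd : BddAbove {n : ℕ | ∃ J, J ⊆ X ∧ M.Indep J ∧ J.ncard = n} := by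
    refine ⟨I.ncard, ?_⟩
    rintro n ⟨J, hJX, hJ, rfl⟩
    exact hmax J hJX hJ
  apply le_antisymm
  · refine csSup_le ⟨0, ∅, Set.empty_subset _, M.empty_indep, Set.ncard_empty _⟩ ?_
    rintro n ⟨J, hJX, hJ, rfl⟩
    exact hmax J hJX hJ
  · exact le_csSup hbdd ⟨I, hIX, hI, rfl⟩

lemma indep_ncard_le_base (hB : M.IsBase B) (hJ : M.Indep J) : J.ncard ≤ B.ncard := by
  obtain ⟨B', hB', hJB'⟩ := hJ.exists_isBase_superset
  exact (Set.ncard_le_ncard hJB' (Set.toFinite _)).trans (le_of_eq (hB'.ncard_eq_ncard_of_isBase hB))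

lemma rank_ground_eq (hB : M.IsBase B) : AB.rank M M.E = B.ncard :=
  rank_eq_ncard hB.subset_ground hB.indep (fun _ _ hJ => indep_ncard_le_base hB hJ)

lemma rank_eq_of_pInt [LinearOrder α] (hE : M.E = univ) {A B : Set α} (hP : PInt M A B) :
    AB.rank M A = (A ∩ B).ncard := by
  obtain ⟨hB, hInt, hExt⟩ := hP
  refine rank_eq_ncard Set.inter_subset_left (hB.indep.inter_left A) ?_
  intro J hJX hJ
  by_contra hcard
  push_neg at hcard
  have hlt : (A ∩ B).encard < J.encard := by
    rw [← (Set.toFinite _).cast_ncard_eq, ← (Set.toFinite J).cast_ncard_eq]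
    exact_mod_cast hcard
  obtain ⟨z, hz, hzind⟩ := (hB.indep.inter_left A).augment hJ hlt
  have hzA : z ∈ A := hJX hz.1
  have hzB : z ∉ B := fun h => hz.2 ⟨hzA, h⟩
  obtain ⟨-, C, hC, hCs, hzC, hmin⟩ := hExt ⟨hzA, hzB⟩
  have hCs' : C ⊆ insert z B := by rw [← Set.union_singleton]; exact hCs
  refine hC.1.not_indep (hzind.subset ?_)
  intro y hyC
  rcases eq_or_ne y z with rfl | hyz
  · exact Set.mem_insert _ _
  have hyB : y ∈ B := by
    rcases hCs hyC with h | h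
    exacts [h, absurd h hyz]
  have hyA : y ∈ A := by
    by_contra hyA
    obtain ⟨-, D, hD, hDs, hyD, hminD⟩ := hInt ⟨hyB, hyA⟩
    have hDs' : D ⊆ insert y (univ \ B) := by
      rw [hE, Set.union_singleton] at hDs; exact hDs
    have hbase : M.IsBase (insert z (B \ {y})) :=
      base_exchange_of_circuit hB hzB hC hCs' hyC hyz
    have hzD : z ∈ D := mem_cocircuit_of_exchange hE hD hDs' hbase
    exact hyz (le_antisymm (hminD z hzD) (hmin y hyC))
  · exact Set.mem_insert_of_mem _ ⟨hyA, hyB⟩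

end Rank

lemma base_empty_of_no_active [LinearOrder α] (hE : M.E = univ) (hB : M.IsBase B)
    (hInt : AB.IntSet M B = ∅) (hExt : AB.ExtSet M B = ∅) : B = ∅ := by
  by_contra hne
  obtain ⟨x, hx⟩ := Set.nonempty_iff_ne_empty.mpr hne
  obtain ⟨m, -, hm⟩ := Finset.exists_min_image Finset.univ id ⟨x, Finset.mem_univ x⟩
  by_cases hmB : m ∈ B
  · obtain ⟨D, hD, hDs, hmD⟩ := exists_fund_cocircuit hE hB hmB
    have hmem : m ∈ AB.IntSet M B :=
      ⟨hmB, D, hD, by rw [hE, Set.union_singleton]; exact hDs, hmD,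
        fun y _ => hm y (Finset.mem_univ y)⟩
    simp [hInt] at hmem
  · obtain ⟨C, hC, hCs, hmC⟩ := exists_fund_circuit hB hmB (by rw [hE]; trivial)
    have hmem : m ∈ AB.ExtSet M B :=
      ⟨⟨by rw [hE]; trivial, hmB⟩, C, hC, by rw [Set.union_singleton]; exact hCs, hmC,
        fun y _ => hm y (Finset.mem_univ y)⟩
    simp [hExt] at hmem

section Sums
variable {F : Finset α}

lemma sum_powerset_sign (F : Finset α) :
    ∑ S ∈ F.powerset, (-1:ℤ)^S.card = if F = ∅ then 1 else 0 :=
  Finset.sum_powerset_neg_one_pow_card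

lemma sum_powerset_sign_card (F : Finset α) :
    ∑ S ∈ F.powerset, (-1:ℤ)^S.card * S.card = if F.card = 1 then -1 else 0 := by
  rcases Finset.eq_empty_or_nonempty F with rfl | ⟨a, ha⟩
  · simp
  · have key : ∀ (G : Finset α), a ∉ G →
        ∑ S ∈ (insert a G).powerset, (-1:ℤ)^S.card * S.card
          = -∑ S ∈ G.powerset, (-1:ℤ)^S.card := by
      intro G haG
      rw [Finset.sum_powerset_insert haG, ← Finset.sum_add_distrib]
      have hpt : ∀ S ∈ G.powerset, ((-1:ℤ)^S.card * S.card
          + (-1:ℤ)^(insert a S).card * (insert a S).card) = -(-1:ℤ)^S.card := by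
        intro S hS
        have haS : a ∉ S := fun h => haG (Finset.mem_powerset.mp hS h)
        rw [Finset.card_insert_of_notMem haS, pow_succ]
        push_cast
        ring
      rw [Finset.sum_congr rfl hpt, Finset.sum_neg_distrib]
    have h := key (F.erase a) (Finset.notMem_erase a F)
    rw [Finset.insert_erase ha] at h
    rw [h, sum_powerset_sign]
    have hiff : F.card = 1 ↔ F.erase a = ∅ := by
      constructor
      · intro h1
        obtain ⟨b, rfl⟩ := Finset.card_eq_one.mp h1
        simp [Finset.mem_singleton.mp ha]
      · intro h1
        have h2 := Finset.card_erase_of_mem ha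
        have h3 := Finset.card_pos.mpr ⟨a, ha⟩
        rw [h1] at h2
        simp only [Finset.card_empty] at h2
        omega
    split_ifs with h1 h2 h2
    · norm_num
    · exact absurd (hiff.mpr h1) h2
    · exact absurd (hiff.mp h2) h1
    · norm_num

lemma neg_one_pow_sub_add {n k m : ℕ} (h : k ≤ n) :
    (-1:ℤ)^(n - k + m) = (-1)^n * (-1)^k * (-1)^m := by
  have h2 : (-1:ℤ)^(2*k) = 1 := by rw [pow_mul]; norm_num
  calc (-1:ℤ)^(n-k+m) = (-1)^(n-k+m) * (-1)^(2*k) := by rw [h2, mul_one]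
    _ = (-1)^(n-k+m+2*k) := by rw [← pow_add]
    _ = (-1)^(n+k+m) := by congr 1; omega
    _ = (-1)^n * (-1)^k * (-1)^m := by rw [pow_add, pow_add]

lemma neg_one_pow_self_mul (n : ℕ) (c : ℤ) : (-1:ℤ)^n * ((-1)^n * c) = c := by
  rw [← mul_assoc, ← pow_add]
  rw [Even.neg_one_pow ⟨n, by omega⟩, one_mul]

end Sums

section Inner
variable [LinearOrder α]

lemma inner_sum (hE : M.E = univ) (Bf : Finset α) (hB : M.IsBase (↑Bf : Set α)) :
    ∑ A ∈ Finset.univ.powerset.filter (fun A : Finset α => PInt M (↑A) (↑Bf)),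
        (-1:ℤ)^A.card * (AB.rank M ↑A : ℤ)
      = (-1:ℤ)^Bf.card *
        ((((if (AB.IntSet M (↑Bf : Set α)).toFinset = ∅ then (Bf.card:ℤ) else 0)
          + (if (AB.IntSet M (↑Bf : Set α)).toFinset.card = 1 then 1 else 0))
        * (if (AB.ExtSet M (↑Bf : Set α)).toFinset = ∅ then 1 else 0))) := by
  set IntF := (AB.IntSet M (↑Bf : Set α)).toFinset with hIntF
  set ExtF := (AB.ExtSet M (↑Bf : Set α)).toFinset with hExtF
  have hIntB : IntF ⊆ Bf := by
    intro x hx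
    have := (Set.mem_toFinset.mp hx).1
    exact_mod_cast this
  have hExtB : ∀ x ∈ ExtF, x ∉ Bf := by
    intro x hx h
    exact (Set.mem_toFinset.mp hx).1.2 (by exact_mod_cast h)
  -- step 1 : replace rank by card of intersection
  have hsum1 : ∑ A ∈ Finset.univ.powerset.filter (fun A : Finset α => PInt M (↑A) (↑Bf)),
        (-1:ℤ)^A.card * (AB.rank M ↑A : ℤ)
      = ∑ A ∈ Finset.univ.powerset.filter (fun A : Finset α => PInt M (↑A) (↑Bf)),
        (-1:ℤ)^A.card * ((A ∩ Bf).card : ℤ) := by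
    refine Finset.sum_congr rfl (fun A hA => ?_)
    have hP : PInt M (↑A) (↑Bf) := (Finset.mem_filter.mp hA).2
    rw [rank_eq_of_pInt hE hP, ← Finset.coe_inter, Set.ncard_coe_finset]
  rw [hsum1]
  -- step 2 : reindex by pairs (S, T)
  have hsum2 : ∑ A ∈ Finset.univ.powerset.filter (fun A : Finset α => PInt M (↑A) (↑Bf)),
        (-1:ℤ)^A.card * ((A ∩ Bf).card : ℤ)
      = ∑ p ∈ IntF.powerset ×ˢ ExtF.powerset,
        (-1:ℤ)^((Bf.card - p.1.card) + p.2.card) * ((Bf.card - p.1.card : ℕ) : ℤ) := by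
    refine (Finset.sum_nbij' (fun A => (Bf \ A, A \ Bf))
      (fun p => (Bf \ p.1) ∪ p.2) ?_ ?_ ?_ ?_ ?_).symm.symm
    · -- maps fiber → product
      intro A hA
      obtain ⟨hBase, hInt, hExt⟩ := (Finset.mem_filter.mp hA).2
      rw [Finset.mem_product, Finset.mem_powerset, Finset.mem_powerset]
      constructor
      · intro x hx
        rw [Finset.mem_sdiff] at hx
        rw [hIntF, Set.mem_toFinset]
        exact hInt ⟨by exact_mod_cast hx.1, by exact_mod_cast hx.2⟩
      · intro x hx
        rw [Finset.mem_sdiff] at hx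
        rw [hExtF, Set.mem_toFinset]
        exact hExt ⟨by exact_mod_cast hx.1, by exact_mod_cast hx.2⟩
    · -- maps product → fiber
      intro p hp
      rw [Finset.mem_product, Finset.mem_powerset, Finset.mem_powerset] at hp
      rw [Finset.mem_filter]
      refine ⟨Finset.mem_powerset.mpr (Finset.subset_univ _), hB, ?_, ?_⟩
      · intro x hx
        rw [Set.mem_diff, Finset.mem_coe, Finset.mem_coe] at hx
        rw [Finset.mem_union, Finset.mem_sdiff] at hx
        have hxS : x ∈ p.1 := by
          rcases hx with ⟨hx1, hx2⟩
          by_contra hxS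
          exact hx2 (Or.inl ⟨hx1, hxS⟩)
        have := hp.1 hxS
        rw [hIntF, Set.mem_toFinset] at this
        exact this
      · intro x hx
        rw [Set.mem_diff, Finset.mem_coe, Finset.mem_coe] at hx
        rw [Finset.mem_union, Finset.mem_sdiff] at hx
        have hxT : x ∈ p.2 := by
          rcases hx with ⟨hx1, hx2⟩
          rcases hx1 with h | h
          · exact absurd h.1 hx2
          · exact h
        have := hp.2 hxT
        rw [hExtF, Set.mem_toFinset] at this
        exact this
    · -- left inverse (on fiber)
      intro A hA
      have hP := (Finset.mem_filter.mp hA).2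
      ext x
      rw [Finset.mem_union, Finset.mem_sdiff, Finset.mem_sdiff, Finset.mem_sdiff]
      constructor
      · rintro (⟨h1, h2⟩ | ⟨h1, h2⟩)
        · by_contra hx; exact h2 ⟨h1, hx⟩
        · exact h1
      · intro hx
        by_cases hxB : x ∈ Bf
        · exact Or.inl ⟨hxB, fun h => h.2 hx⟩
        · exact Or.inr ⟨hx, hxB⟩
    · -- right inverse (on product)
      intro p hp
      rw [Finset.mem_product, Finset.mem_powerset, Finset.mem_powerset] at hp
      have hT : ∀ x ∈ p.2, x ∉ Bf := fun x hx => hExtB x (hp.2 hx)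
      have hS : p.1 ⊆ Bf := fun x hx => hIntB (hp.1 hx)
      have e1 : Bf \ ((Bf \ p.1) ∪ p.2) = p.1 := by
        ext x
        rw [Finset.mem_sdiff, Finset.mem_union, Finset.mem_sdiff]
        constructor
        · rintro ⟨h1, h2⟩
          by_contra hx
          exact h2 (Or.inl ⟨h1, hx⟩)
        · intro hx
          refine ⟨hS hx, ?_⟩
          rintro (h | h)
          · exact h.2 hx
          · exact hT x h (hS hx)
      have e2 : ((Bf \ p.1) ∪ p.2) \ Bf = p.2 := by
        ext x
        rw [Finset.mem_sdiff, Finset.mem_union, Finset.mem_sdiff]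
        constructor
        · rintro ⟨h1, h2⟩
          rcases h1 with h | h
          · exact absurd h.1 h2
          · exact h
        · intro hx
          exact ⟨Or.inr hx, hT x hx⟩
      show (Bf \ (Bf \ p.1 ∪ p.2), (Bf \ p.1 ∪ p.2) \ Bf) = p
      rw [e1, e2]
    · -- value equality
      intro A hA
      have hP := (Finset.mem_filter.mp hA).2
      have hInt : ∀ x ∈ Bf \ A, x ∈ IntF := by
        intro x hx
        rw [Finset.mem_sdiff] at hx
        rw [hIntF, Set.mem_toFinset]
        exact hP.2.1 ⟨by exact_mod_cast hx.1, by exact_mod_cast hx.2⟩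
      have hcard1 : A.card = (Bf.card - (Bf \ A).card) + (A \ Bf).card := by
        have h1 : (Bf \ A).card ≤ Bf.card := Finset.card_le_card (Finset.sdiff_subset)
        have h2 : (A ∩ Bf).card + (Bf \ A).card = Bf.card := by
          rw [Finset.inter_comm]
          exact Finset.card_inter_add_card_sdiff Bf A
        have h3 : (A ∩ Bf).card + (A \ Bf).card = A.card :=
          Finset.card_inter_add_card_sdiff A Bf
        omega
      have hcard2 : (A ∩ Bf).card = Bf.card - (Bf \ A).card := by
        have h2 : (A ∩ Bf).card + (Bf \ A).card = Bf.card := by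
          rw [Finset.inter_comm]
          exact Finset.card_inter_add_card_sdiff Bf A
        omega
      rw [hcard1, hcard2]
  rw [hsum2]
  -- step 3 : evaluate the product sum
  rw [Finset.sum_product]
  have hpt : ∀ S ∈ IntF.powerset,
      (∑ T ∈ ExtF.powerset, (-1:ℤ)^((Bf.card - S.card) + T.card) * ((Bf.card - S.card : ℕ) : ℤ))
      = ((-1:ℤ)^Bf.card * ((-1:ℤ)^S.card * ((Bf.card : ℤ) - S.card)))
          * ∑ T ∈ ExtF.powerset, (-1:ℤ)^T.card := by
    intro S hS
    have hSB : S.card ≤ Bf.card :=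
      Finset.card_le_card ((Finset.mem_powerset.mp hS).trans hIntB)
    rw [Finset.mul_sum]
    refine Finset.sum_congr rfl (fun T hT => ?_)
    rw [neg_one_pow_sub_add hSB, Nat.cast_sub hSB]
    ring
  rw [Finset.sum_congr rfl hpt, ← Finset.sum_mul, ← Finset.mul_sum, sum_powerset_sign]
  have hfin : ∑ S ∈ IntF.powerset, ((-1:ℤ)^S.card * ((Bf.card : ℤ) - S.card))
      = (if IntF = ∅ then (Bf.card:ℤ) else 0) + (if IntF.card = 1 then 1 else 0) := by
    have : ∀ S ∈ IntF.powerset, (-1:ℤ)^S.card * ((Bf.card : ℤ) - S.card)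
        = (-1:ℤ)^S.card * (Bf.card : ℤ) - (-1:ℤ)^S.card * S.card := by
      intro S _; ring
    rw [Finset.sum_congr rfl this, Finset.sum_sub_distrib, ← Finset.sum_mul,
      sum_powerset_sign, sum_powerset_sign_card]
    split_ifs <;> ring
  rw [hfin]
  ring

end Inner

theorem crapo [LinearOrder α] (M : Matroid α) (hE : M.E = Set.univ) :
    ((Finset.univ.powerset.filter (fun B : Finset α =>
        M.IsBase ↑B ∧ (AB.IntSet M ↑B).ncard = 1 ∧ (AB.ExtSet M ↑B).ncard = 0)).card : ℤ)
      = AB.beta M := by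
  symm
  have key : ∀ A : Finset α, ∃! B : Set α, PInt M (↑A) B := fun A => existsUnique_pInt hE _
  set g : Finset α → Finset α := fun A => ((key A).exists.choose).toFinset with hg
  have gspec : ∀ A : Finset α, PInt M (↑A) ((key A).exists.choose) :=
    fun A => (key A).exists.choose_spec
  have gchar : ∀ (A Bf : Finset α), g A = Bf ↔ PInt M (↑A) (↑Bf) := by
    intro A Bf
    constructor
    · rintro rfl
      have h := gspec A
      rwa [← Set.coe_toFinset ((key A).exists.choose)] at h
    · intro h
      have hu : (↑Bf : Set α) = (key A).exists.choose := (key A).unique h (gspec A)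
      rw [hg]
      simp only
      rw [← hu, Finset.toFinset_coe]
  set t := Finset.univ.powerset.filter (fun Bf : Finset α => M.IsBase (↑Bf : Set α)) with ht
  have hmaps : ∀ A ∈ (Finset.univ : Finset α).powerset, g A ∈ t := by
    intro A _
    rw [ht, Finset.mem_filter]
    refine ⟨Finset.mem_powerset.mpr (Finset.subset_univ _), ?_⟩
    rw [Set.coe_toFinset]
    exact (gspec A).1
  have hfib := Finset.sum_fiberwise_of_maps_to hmaps
      (fun A : Finset α => (-1:ℤ)^A.card * (AB.rank M (↑A : Set α) : ℤ))
  rw [AB.beta, ← hfib]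
  have hstep : ∀ Bf ∈ t,
      (∑ A ∈ Finset.univ.powerset.filter (fun A => g A = Bf),
        (-1:ℤ)^A.card * (AB.rank M (↑A : Set α) : ℤ))
      = (-1:ℤ)^Bf.card * ((((if (AB.IntSet M (↑Bf : Set α)).toFinset = ∅ then (Bf.card:ℤ) else 0)
          + (if (AB.IntSet M (↑Bf : Set α)).toFinset.card = 1 then 1 else 0))
        * (if (AB.ExtSet M (↑Bf : Set α)).toFinset = ∅ then 1 else 0))) := by
    intro Bf hBf
    have hB : M.IsBase (↑Bf : Set α) := (Finset.mem_filter.mp hBf).2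
    rw [show Finset.univ.powerset.filter (fun A => g A = Bf)
        = Finset.univ.powerset.filter (fun A : Finset α => PInt M (↑A) (↑Bf)) from
      Finset.filter_congr (fun A _ => by rw [gchar A Bf])]
    exact inner_sum hE Bf hB
  rw [Finset.sum_congr rfl hstep, Finset.mul_sum]
  have hstep2 : ∀ Bf ∈ t,
      (-1:ℤ)^(AB.rank M M.E) * ((-1:ℤ)^Bf.card *
        ((((if (AB.IntSet M (↑Bf : Set α)).toFinset = ∅ then (Bf.card:ℤ) else 0)
          + (if (AB.IntSet M (↑Bf : Set α)).toFinset.card = 1 then 1 else 0))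
        * (if (AB.ExtSet M (↑Bf : Set α)).toFinset = ∅ then 1 else 0))))
      = (if ((AB.IntSet M (↑Bf : Set α)).toFinset.card = 1
          ∧ (AB.ExtSet M (↑Bf : Set α)).toFinset = ∅) then 1 else 0) := by
    intro Bf hBf
    have hB : M.IsBase (↑Bf : Set α) := (Finset.mem_filter.mp hBf).2
    have hrk : AB.rank M M.E = Bf.card := by
      rw [rank_ground_eq hB, Set.ncard_coe_finset]
    rw [hrk, neg_one_pow_self_mul]
    by_cases hExt : (AB.ExtSet M (↑Bf : Set α)).toFinset = ∅
    · by_cases hInt : (AB.IntSet M (↑Bf : Set α)).toFinset = ∅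
      · have hBe : (↑Bf : Set α) = ∅ :=
          base_empty_of_no_active hE hB (Set.toFinset_eq_empty.mp hInt)
            (Set.toFinset_eq_empty.mp hExt)
        have hBf0 : Bf = ∅ := by
          exact_mod_cast hBe
        subst hBf0
        rw [hInt, hExt]
        simp
      · have hc : ¬ (AB.IntSet M (↑Bf : Set α)).toFinset.card = 0 :=
          fun h => hInt (Finset.card_eq_zero.mp h)
        by_cases h1 : (AB.IntSet M (↑Bf : Set α)).toFinset.card = 1 <;>
          simp [hInt, hExt, h1]
    · simp [hExt]
  rw [Finset.sum_congr rfl hstep2]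
  rw [Finset.sum_boole]
  have hfilter : t.filter (fun Bf : Finset α => (AB.IntSet M (↑Bf : Set α)).toFinset.card = 1
      ∧ (AB.ExtSet M (↑Bf : Set α)).toFinset = ∅)
      = Finset.univ.powerset.filter (fun B : Finset α =>
        M.IsBase ↑B ∧ (AB.IntSet M ↑B).ncard = 1 ∧ (AB.ExtSet M ↑B).ncard = 0) := by
    rw [ht, Finset.filter_filter]
    refine Finset.filter_congr (fun Bf _ => ?_)
    constructor
    · rintro ⟨h1, h2, h3⟩
      refine ⟨h1, ?_, ?_⟩
      · rw [Set.ncard_eq_toFinset_card']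
        exact h2
      · rw [Set.ncard_eq_toFinset_card']
        exact Finset.card_eq_zero.mpr h3
    · rintro ⟨h1, h2, h3⟩
      rw [Set.ncard_eq_toFinset_card'] at h2 h3
      exact ⟨h1, h2, Finset.card_eq_zero.mp h3⟩
  rw [hfilter]
end CrapoProof

attribute [local instance] Classical.propDecidable

/-- For any linear order on the ground set, the number of bases with
internal activity 1 and external activity 0 equals the beta invariant `β(M)`; since
`β(M)` does not mention the order, this number is independent of the chosen linear
order. -/
theorem stmt_16 {α : Type*} [Fintype α] [LinearOrder α] (M : Matroid α)
    (hE : M.E = Set.univ) :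
    ((Finset.univ.powerset.filter (fun B : Finset α =>
        M.IsBase ↑B ∧ (AB.IntSet M ↑B).ncard = 1 ∧ (AB.ExtSet M ↑B).ncard = 0)).card : ℤ)
      = AB.beta M :=
  CrapoProof.crapo M hE
end

section
/- Let G = (V,E) be a finite directed graph with E linearly ordered, and suppose the associated oriented matroid is bounded with respect to p = min(E), i.e., G is acyclic and every directed cocycle of G contains p. Then G has a unique source s and a unique sink t, and these are the two endpoints of the edge p (G is bipolar with respect to p). -/
namespace AB

variable {V E : Type*}

/-- `C` is (the edge set of) a directed cycle of the directed multigraph with edge-source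
map `src` and edge-target map `tgt`: a nonempty cyclic sequence of distinct edges, each one
starting where the previous one ends. -/
def IsDirCycle (src tgt : E → V) (C : Set E) : Prop :=
  ∃ n : ℕ, ∃ hn : 0 < n, ∃ f : Fin n → E, Function.Injective f ∧
    (∀ i : Fin n, tgt (f i) = src (f ⟨(i.1 + 1) % n, Nat.mod_lt _ hn⟩)) ∧
    C = Set.range f

/-- The graph is acyclic: it has no directed cycle. -/
def Acyclic (src tgt : E → V) : Prop := ¬ ∃ C, IsDirCycle src tgt C

/-- The directed cut determined by a vertex set `S`: all edges leaving `S`. -/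
def dirCutOf (src tgt : E → V) (S : Set V) : Set E :=
  {e | src e ∈ S ∧ tgt e ∉ S}

/-- `D` is a directed cut: a nonempty set of edges all leaving some vertex set `S` which
no edge enters. -/
def IsDirCut (src tgt : E → V) (D : Set E) : Prop :=
  ∃ S : Set V, D = dirCutOf src tgt S ∧ dirCutOf tgt src S = ∅ ∧ D.Nonempty

/-- `D` is a directed cocycle (directed bond): a minimal directed cut. -/
def IsDirCocycle (src tgt : E → V) (D : Set E) : Prop :=
  IsDirCut src tgt D ∧ ∀ D', IsDirCut src tgt D' → D' ⊆ D → D' = D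

end AB

namespace AB

/-- Two vertices are connected in the underlying undirected graph. -/
def UConnected {V E : Type*} (src tgt : E → V) : Prop :=
  ∀ u v : V, Relation.ReflTransGen
    (fun a b => ∃ e : E, (src e = a ∧ tgt e = b) ∨ (src e = b ∧ tgt e = a)) u v

/-- A source: a vertex with no incoming edge. -/
def IsSource {V E : Type*} (src tgt : E → V) (v : V) : Prop := ∀ e : E, tgt e ≠ v

/-- A sink: a vertex with no outgoing edge. -/
def IsSink {V E : Type*} (src tgt : E → V) (v : V) : Prop := ∀ e : E, src e ≠ v

/-- closed walk -/
def CW (src tgt : E → V) (m : List E) : Prop :=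
  ∀ i : Fin m.length, tgt (m.get i) =
    src (m.get ⟨(i.1 + 1) % m.length, Nat.mod_lt _ (i.1.zero_lt_of_lt i.2)⟩)

lemma cycle_of_nodup_CW (src tgt : E → V) (m : List E) (hne : m ≠ [])
    (hnd : m.Nodup) (hcw : CW src tgt m) : ∃ C, IsDirCycle src tgt C := by
  refine ⟨Set.range m.get, m.length, List.length_pos_iff.2 hne, m.get, ?_, ?_, rfl⟩
  · exact (List.nodup_iff_injective_get).1 hnd
  · exact hcw

lemma CW_shrink (src tgt : E → V) : ∀ n (m : List E), m.length = n → m ≠ [] →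
    CW src tgt m → ∃ m' : List E, m' ≠ [] ∧ m'.Nodup ∧ CW src tgt m' := by
  intro n
  induction n using Nat.strong_induction_on with
  | _ n IH =>
    intro m hlen hne hcw
    by_cases hnd : m.Nodup
    · exact ⟨m, hne, hnd, hcw⟩
    · rw [List.nodup_iff_injective_get, Function.not_injective_iff] at hnd
      obtain ⟨a, b, hab, hne'⟩ := hnd
      obtain ⟨i, j, hij, heq⟩ : ∃ i j : Fin m.length, i.1 < j.1 ∧ m.get i = m.get j := by
        rcases lt_or_gt_of_ne (Fin.val_ne_of_ne hne') with h | h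
        · exact ⟨a, b, h, hab⟩
        · exact ⟨b, a, h, hab.symm⟩
      have hj2 := j.2
      set m' : List E := (m.drop i.1).take (j.1 - i.1) with hm'
      have hlen' : m'.length = j.1 - i.1 := by
        simp only [hm', List.length_take, List.length_drop]
        omega
      have hget : ∀ k (hk : k < m'.length), m'.get ⟨k, hk⟩ =
          m.get ⟨i.1 + k, by omega⟩ := by
        intro k hk
        simp only [hm', List.get_eq_getElem, List.getElem_take, List.getElem_drop]
      have hne2 : m' ≠ [] := by
        intro h; rw [h] at hlen'; simp only [List.length_nil] at hlen'; omega
      have hcw' : CW src tgt m' := by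
        intro ⟨k, hk⟩
        have hk' : k < j.1 - i.1 := hlen' ▸ hk
        by_cases hlast : k + 1 < j.1 - i.1
        · have e1 : (k + 1) % m'.length = k + 1 := by
            rw [hlen']; exact Nat.mod_eq_of_lt hlast
          simp only [e1]
          rw [hget k hk, hget (k+1) (by omega)]
          have h := hcw ⟨i.1 + k, by omega⟩
          have e2 : (i.1 + k + 1) % m.length = i.1 + k + 1 := Nat.mod_eq_of_lt (by omega)
          simp only [e2] at h
          exact h
        · have hk0 : k = j.1 - i.1 - 1 := by omega
          have e1 : (k + 1) % m'.length = 0 := by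
            rw [hlen', hk0, Nat.sub_add_cancel (by omega), Nat.mod_self]
          simp only [e1]
          rw [hget k hk, hget 0 (by omega)]
          have h := hcw ⟨j.1 - 1, by omega⟩
          have e2 : (j.1 - 1 + 1) % m.length = j.1 := by
            rw [Nat.sub_add_cancel (by omega)]; exact Nat.mod_eq_of_lt hj2
          simp only [e2] at h
          have h4 : m.get ⟨i.1 + k, by omega⟩ = m.get ⟨j.1 - 1, by omega⟩ := by
            congr 1; exact Fin.ext (show i.1 + k = j.1 - 1 by omega)
          have h5 : m.get ⟨i.1 + 0, by omega⟩ = m.get i := rfl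
          rw [h4, h5, heq]
          exact h
      exact IH m'.length (by omega) m' rfl hne2 hcw'

lemma exists_walk_list (src tgt : E → V) {a b : V}
    (h : Relation.ReflTransGen (fun x y => ∃ e, src e = x ∧ tgt e = y) a b) :
    ∃ l : List E, (∀ i (h1 : i + 1 < l.length), tgt (l.get ⟨i, by omega⟩) = src (l.get ⟨i+1, h1⟩)) ∧
      (l = [] → a = b) ∧
      (∀ h0 : 0 < l.length, src (l.get ⟨0, h0⟩) = a ∧ tgt (l.get ⟨l.length - 1, by omega⟩) = b) := by
  induction h using Relation.ReflTransGen.head_induction_on with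
  | refl => exact ⟨[], by simp, fun _ => rfl, by simp⟩
  | head hac hcb IH =>
    obtain ⟨e, he1, he2⟩ := hac
    obtain ⟨l, hchain, hnil, hends⟩ := IH
    refine ⟨e :: l, ?_, by simp, ?_⟩
    · intro i h1
      match i with
      | 0 =>
        simp only [List.get_eq_getElem, List.getElem_cons_zero, List.getElem_cons_succ]
        have hl : 0 < l.length := by simpa using h1
        rw [he2, ((hends hl).1).symm]
        rfl
      | Nat.succ i' =>
        simp only [List.get_eq_getElem, List.getElem_cons_succ]
        exact hchain i' (by simpa using h1)
    · intro h0
      constructor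
      · simpa using he1
      · by_cases hl : l = []
        · subst hl
          simpa using he2.trans (hnil rfl)
        · have hl0 : 0 < l.length := List.length_pos_iff.2 hl
          have := (hends hl0).2
          have hidx : (e :: l).length - 1 = l.length - 1 + 1 := by
            simp; omega
          simp only [List.get_eq_getElem] at this ⊢
          simp only [hidx, List.getElem_cons_succ]
          exact this

lemma cycle_of_back_edge (src tgt : E → V) (e : E)
    (h : Relation.ReflTransGen (fun x y => ∃ e, src e = x ∧ tgt e = y) (tgt e) (src e)) :
    ∃ C, IsDirCycle src tgt C := by
  obtain ⟨l, hchain, hnil, hends⟩ := exists_walk_list src tgt h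
  have hcw : CW src tgt (e :: l) := by
    intro ⟨i, hi⟩
    by_cases hl : l = []
    · subst hl
      have hi0 : i = 0 := by simpa using hi
      subst hi0
      simpa using hnil rfl
    · have hl0 : 0 < l.length := List.length_pos_iff.2 hl
      have hml : (e :: l).length = l.length + 1 := by simp
      match i, hi with
      | 0, hi =>
        have h1 : (0 + 1) % (e :: l).length = 1 := by
          rw [hml]; exact Nat.mod_eq_of_lt (by omega)
        simp only [h1]
        simp only [List.get_eq_getElem, List.getElem_cons_zero, List.getElem_cons_succ]
        exact ((hends hl0).1).symm
      | Nat.succ i', hi =>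
        by_cases hlast : i' + 1 + 1 < (e :: l).length
        · have h1 : (i' + 1 + 1) % (e :: l).length = i' + 1 + 1 := Nat.mod_eq_of_lt hlast
          simp only [h1]
          simp only [List.get_eq_getElem, List.getElem_cons_succ]
          exact hchain i' (by omega)
        · have hieq : i' = l.length - 1 := by simp at hi hlast ⊢; omega
          have h1 : (i' + 1 + 1) % (e :: l).length = 0 := by
            rw [hml]; have : i' + 1 + 1 = l.length + 1 := by omega
            rw [this, Nat.mod_self]
          simp only [h1]
          simp only [List.get_eq_getElem, List.getElem_cons_succ, List.getElem_cons_zero]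
          have := (hends hl0).2
          simp only [List.get_eq_getElem] at this
          subst hieq
          exact this
  obtain ⟨m', hne', hnd', hcw'⟩ := CW_shrink src tgt (e :: l).length (e :: l) rfl (by simp) hcw
  exact cycle_of_nodup_CW src tgt m' hne' hnd' hcw'

/-- Reversing cycles: acyclicity transfers to the reversed graph. -/
lemma acyclic_swap (src tgt : E → V) (h : Acyclic src tgt) : Acyclic tgt src := by
  rintro ⟨C, n, hn, f, hinj, hstep, rfl⟩
  refine h ⟨_, n, hn, fun i => f ⟨n - 1 - i.1, by omega⟩, ?_, ?_, rfl⟩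
  · intro a b hab
    have := hinj hab
    have := Fin.mk.injEq .. ▸ this
    exact Fin.ext (by have ha := a.2; have hb := b.2; omega)
  · intro i
    have hi := i.2
    have key := hstep ⟨n - 1 - ((i.1 + 1) % n), by omega⟩
    have hmod : (n - 1 - ((i.1 + 1) % n) + 1) % n = n - 1 - i.1 := by
      rcases Nat.lt_or_ge (i.1 + 1) n with h1 | h1
      · rw [Nat.mod_eq_of_lt h1]
        have : n - 1 - (i.1 + 1) + 1 = n - 1 - i.1 := by omega
        rw [this]
        exact Nat.mod_eq_of_lt (by omega)
      · have hieq : i.1 = n - 1 := by omega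
        have : (i.1 + 1) % n = 0 := by rw [hieq, Nat.sub_add_cancel (by omega), Nat.mod_self]
        rw [this]
        simp only [Nat.sub_zero]
        rw [Nat.sub_add_cancel (by omega), Nat.mod_self]
        omega
    show tgt (f ⟨n - 1 - i.1, by omega⟩) = src (f ⟨n - 1 - ((i.1 + 1) % n), by omega⟩)
    have e1 : f (⟨n - 1 - i.1, by omega⟩ : Fin n)
        = f ⟨(n - 1 - ((i.1 + 1) % n) + 1) % n, by omega⟩ :=
      congrArg f (Fin.ext hmod.symm)
    rw [e1]
    exact key.symm

/-- A directed cut of the reversed graph is a directed cut of the original graph. -/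
lemma cut_swap (src tgt : E → V) (D : Set E) (h : IsDirCut tgt src D) :
    IsDirCut src tgt D := by
  obtain ⟨S, hD, hrev, hne⟩ := h
  refine ⟨Sᶜ, ?_, ?_, hne⟩
  · rw [hD]; ext e
    simp only [dirCutOf, Set.mem_setOf_eq, Set.mem_compl_iff, not_not]
    tauto
  · rw [Set.eq_empty_iff_forall_notMem] at hrev ⊢
    intro e he
    exact hrev e ⟨by simpa using he.2, by simpa using he.1⟩

/-- Any undirected walk from inside `A` to outside `A` crosses the boundary. -/
lemma crossing (src tgt : E → V) (A : Set V) {u v : V}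
    (h : Relation.ReflTransGen
      (fun a b => ∃ e : E, (src e = a ∧ tgt e = b) ∨ (src e = b ∧ tgt e = a)) u v)
    (hu : u ∈ A) (hv : v ∉ A) :
    ∃ e : E, (src e ∈ A ∧ tgt e ∉ A) ∨ (tgt e ∈ A ∧ src e ∉ A) := by
  induction h with
  | refl => exact absurd hu hv
  | @tail b c hab hbc IH =>
    by_cases hc : b ∈ A
    · obtain ⟨e, he⟩ := hbc
      rcases he with ⟨h1, h2⟩ | ⟨h1, h2⟩
      · exact ⟨e, Or.inl ⟨h1 ▸ hc, h2 ▸ hv⟩⟩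
      · exact ⟨e, Or.inr ⟨h2 ▸ hc, h1 ▸ hv⟩⟩
    · exact IH hc

/-- Every directed cut contains a directed cocycle; so if `p` lies in every cocycle it
lies in every cut. -/
lemma cut_mem_of_cocycle_mem [Fintype E] (src tgt : E → V) (p : E)
    (hcocyc : ∀ D, IsDirCocycle src tgt D → p ∈ D)
    (D : Set E) (hD : IsDirCut src tgt D) : p ∈ D := by
  classical
  have hex : ∃ n, ∃ D' : Set E, IsDirCut src tgt D' ∧ D' ⊆ D ∧ D'.ncard = n :=
    ⟨D.ncard, D, hD, subset_rfl, rfl⟩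
  obtain ⟨D', hD', hsub, hcard⟩ := Nat.find_spec hex
  have hmin : ∀ D'', IsDirCut src tgt D'' → D'' ⊆ D' → D'' = D' := by
    intro D'' h2 hsub2
    have hle : Nat.find hex ≤ D''.ncard :=
      Nat.find_le ⟨D'', h2, hsub2.trans hsub, rfl⟩
    exact Set.eq_of_subset_of_ncard_le hsub2 (by omega) (Set.toFinite D')
  exact hsub (hcocyc D' ⟨hD', hmin⟩)

lemma source_main [Fintype E] (src tgt : E → V) (hconn : UConnected src tgt)
    (hacyc : Acyclic src tgt) (p : E) (hcut : ∀ D, IsDirCut src tgt D → p ∈ D) :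
    IsSource src tgt (src p) ∧ ∀ s, IsSource src tgt s → s = src p := by
  constructor
  · -- src p is a source
    intro e he
    set T : Set V := {v | Relation.ReflTransGen
      (fun x y => ∃ x', src x' = x ∧ tgt x' = y) v (src e)} with hT
    have hsrcp : src p ∉ T := by
      intro h
      exact hacyc (cycle_of_back_edge src tgt e (he ▸ h))
    have hcutT : IsDirCut src tgt (dirCutOf src tgt T) := by
      refine ⟨T, rfl, ?_, ⟨e, Relation.ReflTransGen.refl, fun h => hsrcp (he ▸ h)⟩⟩
      rw [Set.eq_empty_iff_forall_notMem]
      rintro e' ⟨h1, h2⟩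
      exact h2 (Relation.ReflTransGen.head ⟨e', rfl, rfl⟩ h1)
    exact hsrcp (hcut _ hcutT).1
  · -- uniqueness
    intro s hs
    by_contra hne
    have hcutS : IsDirCut src tgt (dirCutOf src tgt {s}) := by
      refine ⟨{s}, rfl, ?_, ?_⟩
      · rw [Set.eq_empty_iff_forall_notMem]
        rintro e' ⟨h1, h2⟩
        exact hs e' h1
      · obtain ⟨e, he⟩ := crossing src tgt {s} (hconn s (src p)) rfl
          (fun h => hne (Set.eq_of_mem_singleton h).symm)
        rcases he with ⟨h1, h2⟩ | ⟨h1, h2⟩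
        · exact ⟨e, h1, h2⟩
        · exact absurd h1 (hs e)
    have := (hcut _ hcutS).1
    exact hne (Set.eq_of_mem_singleton this).symm

end AB

/-- Let `G` be a finite connected directed graph with at least one edge,
with linearly ordered edge set, acyclic, and such that every directed cocycle contains the
minimum edge `p`. Then `G` has a unique source and a unique sink, and they are the two
endpoints of `p` (the source is the tail of `p` and the sink is its head). -/
theorem stmt_17 {V E : Type*} [Fintype V] [Fintype E] [LinearOrder E]
    (src tgt : E → V) (hconn : AB.UConnected src tgt)
    (hacyc : AB.Acyclic src tgt)
    (p : E) (hp : ∀ e : E, p ≤ e)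
    (hcocyc : ∀ D, AB.IsDirCocycle src tgt D → p ∈ D) :
    (∃! s, AB.IsSource src tgt s) ∧ (∃! t, AB.IsSink src tgt t) ∧
      AB.IsSource src tgt (src p) ∧ AB.IsSink src tgt (tgt p) := by
  have hcut : ∀ D, AB.IsDirCut src tgt D → p ∈ D :=
    AB.cut_mem_of_cocycle_mem src tgt p hcocyc
  have hcut' : ∀ D, AB.IsDirCut tgt src D → p ∈ D :=
    fun D hD => hcut D (AB.cut_swap src tgt D hD)
  have hacyc' := AB.acyclic_swap src tgt hacyc
  have hconn' : AB.UConnected tgt src := by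
    intro u v
    refine Relation.ReflTransGen.mono ?_ u v (hconn u v)
    rintro a b ⟨e, ⟨h1, h2⟩ | ⟨h1, h2⟩⟩
    · exact ⟨e, Or.inr ⟨h2, h1⟩⟩
    · exact ⟨e, Or.inl ⟨h2, h1⟩⟩
  obtain ⟨hsrc, huniq⟩ := AB.source_main src tgt hconn hacyc p hcut
  obtain ⟨hsnk, huniq'⟩ := AB.source_main tgt src hconn' hacyc' p hcut'
  exact ⟨⟨src p, hsrc, fun s hs => huniq s hs⟩, ⟨tgt p, hsnk, fun t ht => huniq' t ht⟩,
    hsrc, hsnk⟩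
end

section
/- Let M be a matroid on a finite linearly ordered set E and let (F'_ε,...,F'_0,F_c,F_0,...,F_ι) be a connected filtration of M. Then each F_k (0 ≤ k ≤ ι) is a flat of M, each F'_k (0 ≤ k ≤ ε) is a union of circuits of M, and F_c is a cyclic flat of M (both a flat and a union of circuits). -/
open scoped Matroid

namespace AB

/-- The contraction `M / C` of a set in a matroid, defined by duality:
`M / C = (M* restricted to (E \ C))*`. -/
noncomputable def contract {α : Type*} (M : Matroid α) (C : Set α) : Matroid α :=
  (M✶ ↾ (M.E \ C))✶

/-- A loop: an element of the ground set that is dependent on its own. -/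
def Loop {α : Type*} (M : Matroid α) (e : α) : Prop := e ∈ M.E ∧ ¬ M.Indep {e}

/-- A coloop: a loop of the dual matroid. -/
def Coloop {α : Type*} (M : Matroid α) (e : α) : Prop := Loop M✶ e

end AB

namespace AB

/-- The minor `(M|G)/F` of a matroid. -/
noncomputable def minorIC {α : Type*} (M : Matroid α) (G F : Set α) : Matroid α :=
  contract (M ↾ G) F

/-- A connected matroid: nonempty ground set, and any two distinct elements lie in a
common circuit. -/
def MConnected {α : Type*} (M : Matroid α) : Prop :=
  M.E.Nonempty ∧ ∀ e ∈ M.E, ∀ f ∈ M.E, e = f ∨ ∃ C, Circuit M C ∧ e ∈ C ∧ f ∈ C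

/-- The matroid is a single loop. -/
def IsLoopMatroid {α : Type*} (M : Matroid α) : Prop := ∃ e, M.E = {e} ∧ Loop M e

/-- The matroid is a single coloop (isthmus). -/
def IsColoopMatroid {α : Type*} (M : Matroid α) : Prop := ∃ e, M.E = {e} ∧ Coloop M e

/-- `(ε, ι, F', F)` is a connected filtration of the ordered matroid `M`:
a chain `∅ = F'_ε ⊂ ... ⊂ F'_0 = F_c = F_0 ⊂ ... ⊂ F_ι = M.E` such that the minima
`min (F_k \ F_{k-1})` (for `1 ≤ k ≤ ι`) are increasing in `k`, the minima
`min (F'_{k-1} \ F'_k)` (for `1 ≤ k ≤ ε`) are increasing in `k`, each minor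
`(M|F_k)/F_{k-1}` is connected and not a loop, and each minor `(M|F'_{k-1})/F'_k`
is connected and not a coloop. -/
def IsConnFiltration {α : Type*} [LinearOrder α] (M : Matroid α)
    (ε ι : ℕ) (F' F : ℕ → Set α) : Prop :=
  F' ε = ∅ ∧ F' 0 = F 0 ∧ F ι = M.E ∧
  (∀ k, k < ι → F k ⊂ F (k + 1)) ∧
  (∀ k, k < ε → F' (k + 1) ⊂ F' k) ∧
  (∀ k, k + 1 < ι → ∃ a b, IsLeast (F (k + 1) \ F k) a ∧
    IsLeast (F (k + 2) \ F (k + 1)) b ∧ a < b) ∧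
  (∀ k, k + 1 < ε → ∃ a b, IsLeast (F' k \ F' (k + 1)) a ∧
    IsLeast (F' (k + 1) \ F' (k + 2)) b ∧ a < b) ∧
  (∀ k, k < ι → MConnected (minorIC M (F (k + 1)) (F k)) ∧
    ¬ IsLoopMatroid (minorIC M (F (k + 1)) (F k))) ∧
  (∀ k, k < ε → MConnected (minorIC M (F' k) (F' (k + 1))) ∧
    ¬ IsColoopMatroid (minorIC M (F' k) (F' (k + 1))))

end AB


namespace AB
open Set Matroid

variable {α : Type*}

lemma flat_of_closure_subset {M : Matroid α} {X : Set α} (hX : X ⊆ M.E)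
    (h : M.closure X ⊆ X) : M.IsFlat X := by
  refine ⟨fun I Y hIX hIY => ?_, hX⟩
  have h1 : Y ⊆ M.closure I := hIY.subset_closure
  have h2 : M.closure I = M.closure X := hIX.closure_eq_closure
  exact h1.trans (h2 ▸ h)

lemma mem_restrict_closure_iff {M : Matroid α} {X G : Set α} {e : α}
    (hXG : X ⊆ G) (hG : G ⊆ M.E) (heG : e ∈ G) :
    e ∈ (M ↾ G).closure X ↔ e ∈ M.closure X := by
  obtain ⟨I, hI⟩ := (M ↾ G).exists_isBasis X (by rwa [Matroid.restrict_ground_eq])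
  have hIM : M.IsBasis I X := ((Matroid.isBasis_restrict_iff hG).mp hI).1
  rw [← hI.closure_eq_closure, ← hIM.closure_eq_closure,
    hI.indep.mem_closure_iff, hIM.indep.mem_closure_iff,
    Matroid.restrict_dep_iff]
  have hins : insert e I ⊆ G := insert_subset heG (hI.subset.trans hXG)
  constructor
  · rintro (⟨hd, -⟩ | heI)
    · exact Or.inl (Matroid.dep_of_not_indep hd (hins.trans hG))
    · exact Or.inr heI
  · rintro (hd | heI)
    · exact Or.inl ⟨hd.not_indep, hins⟩
    · exact Or.inr heI

lemma exists_circuit_subset {M : Matroid α} [M.Finite] {D : Set α} (hD : M.Dep D) :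
    ∃ C, C ⊆ D ∧ Circuit M C := by
  have H : ∀ n (D : Set α), M.Dep D → D.ncard = n → ∃ C, C ⊆ D ∧ Circuit M C := by
    intro n
    induction n using Nat.strong_induction_on with
    | _ n ih =>
      intro D hD hcard
      by_cases hmin : ∀ D', D' ⊂ D → M.Indep D'
      · exact ⟨D, Subset.rfl, hD, hmin⟩
      · push_neg at hmin
        obtain ⟨D', hss, hni⟩ := hmin
        have hD' : M.Dep D' := Matroid.dep_of_not_indep hni (hss.subset.trans hD.subset_ground)
        have hfin : D.Finite := M.set_finite D hD.subset_ground
        have hlt : D'.ncard < D.ncard := Set.ncard_lt_ncard hss hfin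
        obtain ⟨C, hCD', hC⟩ := ih D'.ncard (hcard ▸ hlt) D' hD' rfl
        exact ⟨C, hCD'.trans hss.subset, hC⟩
  exact H D.ncard D hD rfl

lemma exists_circuit_of_mem_closure {M : Matroid α} [M.Finite] {X : Set α} {e : α}
    (hX : X ⊆ M.E) (he : e ∈ M.closure X) (heX : e ∉ X) :
    ∃ C, Circuit M C ∧ e ∈ C ∧ C ⊆ insert e X := by
  obtain ⟨I, hI⟩ := M.exists_isBasis X
  have heI : e ∉ I := fun h => heX (hI.subset h)
  have hd : M.Dep (insert e I) := by
    rw [hI.indep.insert_dep_iff]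
    exact ⟨hI.closure_eq_closure ▸ he, heI⟩
  obtain ⟨C, hCsub, hC⟩ := exists_circuit_subset hd
  have heC : e ∈ C := by
    by_contra heC
    have hCI : C ⊆ I := fun x hx =>
      (mem_insert_iff.mp (hCsub hx)).resolve_left (fun h => heC (h ▸ hx))
    exact hC.1.not_indep (hI.indep.subset hCI)
  exact ⟨C, hC, heC, hCsub.trans (insert_subset_insert hI.subset)⟩

lemma descend {P : ℕ → Prop} {n : ℕ} (h0 : P n) (hstep : ∀ k, k < n → P (k + 1) → P k) :
    ∀ k, k ≤ n → P k := by
  have H : ∀ d k, k + d = n → P k := by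
    intro d
    induction d with
    | zero =>
      intro k hk
      obtain rfl : k = n := by omega
      exact h0
    | succ d ih =>
      intro k hk
      exact hstep k (by omega) (ih (k + 1) (by omega))
  intro k hk
  exact H (n - k) k (by omega)

lemma flat_step {M : Matroid α} {Fk G : Set α}
    (hFG : Fk ⊆ G) (hG : M.IsFlat G)
    (hconn : MConnected (minorIC M G Fk))
    (hnl : ¬ IsLoopMatroid (minorIC M G Fk))
    (hFkE : Fk ⊆ M.E) : M.IsFlat Fk := by
  have hGE : G ⊆ M.E := hG.subset_ground
  set Q := (M ↾ G)✶ ↾ (G \ Fk) with hQdef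
  have hNQ : minorIC M G Fk = Q✶ := rfl
  rw [hNQ] at hconn hnl
  apply flat_of_closure_subset hFkE
  intro e he
  by_contra heF
  have heG : e ∈ G := by
    have h1 := M.closure_subset_closure hFG he
    rwa [hG.closure] at h1
  have heS : e ∈ G \ Fk := ⟨heG, heF⟩
  have hInd : (Q✶).Indep {e} := by
    by_cases hS : ∃ f ∈ G \ Fk, f ≠ e
    · obtain ⟨f, hf, hfe⟩ := hS
      rcases hconn.2 e heS f hf with rfl | ⟨C, hC, heC, hfC⟩
      · exact absurd rfl hfe
      · exact hC.2 {e} ⟨singleton_subset_iff.mpr heC,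
          fun hEq => hfe (mem_singleton_iff.mp (hEq hfC))⟩
    · push_neg at hS
      have hNE : (Q✶).E = {e} := Set.eq_singleton_iff_unique_mem.mpr ⟨heS, hS⟩
      by_contra hni
      exact hnl ⟨e, hNE, heS, hni⟩
  have hcoind : Q.Coindep {e} := hInd
  have hsp : Q.Spanning ((G \ Fk) \ {e}) :=
    (Matroid.coindep_iff_compl_spanning
      (show {e} ⊆ Q.E from singleton_subset_iff.mpr heS)).mp hcoind
  obtain ⟨B, hB, hBs⟩ := hsp.exists_isBase_subset
  have hBbasis : (M ↾ G)✶.IsBasis B (G \ Fk) :=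
    (Matroid.isBase_restrict_iff (show G \ Fk ⊆ ((M ↾ G)✶).E from diff_subset)).mp hB
  have hBG : B ⊆ G := hBbasis.indep.subset_ground
  have heB : e ∉ B := fun h => (hBs h).2 rfl
  have hsp1 : (M ↾ G).Spanning (G \ B) :=
    (Matroid.coindep_iff_compl_spanning (show B ⊆ (M ↾ G).E from hBG)).mp hBbasis.indep
  have hdep : ((M ↾ G)✶).Dep (insert e B) := hBbasis.insert_dep ⟨heS, heB⟩
  have hnsp : ¬ (M ↾ G).Spanning (G \ insert e B) := by
    intro hspn
    exact hdep.not_indep ((Matroid.coindep_iff_compl_spanning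
      (show insert e B ⊆ (M ↾ G).E from insert_subset heG hBG)).mpr hspn)
  apply hnsp
  have hecl : e ∈ (M ↾ G).closure Fk := (mem_restrict_closure_iff hFG hGE heG).mpr he
  have hsub : Fk ⊆ G \ insert e B := by
    intro x hx
    refine ⟨hFG hx, fun hmem => ?_⟩
    rcases mem_insert_iff.mp hmem with rfl | hxB
    · exact heF hx
    · exact (hBs hxB).1.2 hx
  have hecl2 : e ∈ (M ↾ G).closure (G \ insert e B) :=
    (M ↾ G).closure_subset_closure hsub hecl
  have hGBeq : insert e (G \ insert e B) = G \ B := by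
    ext x
    simp only [mem_insert_iff, mem_diff]
    constructor
    · rintro (rfl | ⟨hxG, hx⟩)
      · exact ⟨heG, heB⟩
      · exact ⟨hxG, fun hb => hx (mem_insert_iff.mpr (Or.inr hb))⟩
    · rintro ⟨hxG, hxB⟩
      by_cases hxe : x = e
      · exact Or.inl hxe
      · refine Or.inr ⟨hxG, fun hmem => ?_⟩
        rcases mem_insert_iff.mp hmem with rfl | hb
        · exact hxe rfl
        · exact hxB hb
  rw [Matroid.spanning_iff_closure_eq (show G \ insert e B ⊆ (M ↾ G).E from diff_subset)]
  rw [← Matroid.closure_insert_eq_of_mem_closure hecl2, hGBeq]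
  exact (Matroid.spanning_iff_closure_eq (show G \ B ⊆ (M ↾ G).E from diff_subset)).mp hsp1

lemma circuits_step {M : Matroid α} [M.Finite] {Fk1 Fk : Set α}
    (hsub : Fk1 ⊆ Fk) (hFkE : Fk ⊆ M.E)
    (hconn : MConnected (minorIC M Fk Fk1))
    (hnc : ¬ IsColoopMatroid (minorIC M Fk Fk1))
    (ih : ∀ e ∈ Fk1, ∃ C, Circuit M C ∧ e ∈ C ∧ C ⊆ Fk1) :
    ∀ e ∈ Fk, ∃ C, Circuit M C ∧ e ∈ C ∧ C ⊆ Fk := by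
  intro e he
  by_cases he1 : e ∈ Fk1
  · obtain ⟨C, h1, h2, h3⟩ := ih e he1
    exact ⟨C, h1, h2, h3.trans hsub⟩
  set P := M ↾ Fk with hPdef
  set S := Fk \ Fk1 with hSdef
  set Q := P✶ ↾ S with hQdef
  have hNQ : minorIC M Fk Fk1 = Q✶ := rfl
  have heS : e ∈ S := ⟨he, he1⟩
  rw [hNQ] at hconn hnc
  have hQe : Q.Indep {e} := by
    by_cases hS : ∃ f ∈ S, f ≠ e
    · obtain ⟨f, hf, hfe⟩ := hS
      rcases hconn.2 e heS f hf with rfl | ⟨C, hC, heC, hfC⟩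
      · exact absurd rfl hfe
      · have hCE : C ⊆ S := hC.1.subset_ground
        have hspan1 : Q.Spanning (S \ (C \ {e})) := by
          have h1 : (Q✶).Indep (C \ {e}) := hC.2 _ (Set.sdiff_singleton_ssubset.mpr heC)
          exact (Matroid.coindep_iff_compl_spanning
            (show C \ {e} ⊆ Q.E from diff_subset.trans hCE)).mp h1
        have hnsp : ¬ Q.Spanning (S \ C) := by
          intro hspn
          exact hC.1.not_indep ((Matroid.coindep_iff_compl_spanning
            (show C ⊆ Q.E from hCE)).mpr hspn)
        by_contra hni
        apply hnsp
        obtain ⟨I, hI⟩ := Q.exists_isBasis (S \ C) (show S \ C ⊆ Q.E from diff_subset)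
        have hdepQ : Q.Dep (insert e I) := by
          have h1 : Q.Dep {e} := Matroid.dep_of_not_indep hni (singleton_subset_iff.mpr heS)
          exact h1.superset (singleton_subset_iff.mpr (mem_insert e I))
            (insert_subset heS hI.indep.subset_ground)
        have hecl : e ∈ Q.closure (S \ C) := by
          rw [← hI.closure_eq_closure, hI.indep.mem_closure_iff]
          exact Or.inl hdepQ
        have heq : S \ (C \ {e}) = insert e (S \ C) := by
          ext x
          simp only [mem_insert_iff, mem_diff, mem_singleton_iff]
          constructor
          · rintro ⟨hxS, hx⟩
            by_cases hxe : x = e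
            · exact Or.inl hxe
            · exact Or.inr ⟨hxS, fun hxC => hx ⟨hxC, hxe⟩⟩
          · rintro (rfl | ⟨hxS, hxC⟩)
            · exact ⟨heS, fun h1 => h1.2 rfl⟩
            · exact ⟨hxS, fun h1 => hxC h1.1⟩
        rw [heq] at hspan1
        rw [Matroid.spanning_iff_closure_eq (show S \ C ⊆ Q.E from diff_subset)]
        rw [← Matroid.closure_insert_eq_of_mem_closure hecl]
        exact (Matroid.spanning_iff_closure_eq
          (show insert e (S \ C) ⊆ Q.E from insert_subset heS diff_subset)).mp hspan1
    · push_neg at hS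
      have hNE : (Q✶).E = {e} := Set.eq_singleton_iff_unique_mem.mpr ⟨heS, hS⟩
      by_contra hni
      refine hnc ⟨e, hNE, heS, ?_⟩
      simp only [Matroid.dual_dual]
      exact hni
  have hPcoind : P.Coindep {e} := (Matroid.restrict_indep_iff.mp hQe).1
  have hPsp : P.Spanning (Fk \ {e}) :=
    (Matroid.coindep_iff_compl_spanning
      (show {e} ⊆ P.E from singleton_subset_iff.mpr he)).mp hPcoind
  have hecl : e ∈ P.closure (Fk \ {e}) := by
    have h1 := (Matroid.spanning_iff_closure_eq
      (show Fk \ {e} ⊆ P.E from diff_subset)).mp hPsp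
    rw [h1]; exact he
  have heclM : e ∈ M.closure (Fk \ {e}) :=
    (mem_restrict_closure_iff diff_subset hFkE he).mp hecl
  obtain ⟨C, hC, heC, hCsub⟩ := exists_circuit_of_mem_closure
    (diff_subset.trans hFkE) heclM (fun h1 => h1.2 rfl)
  rw [insert_diff_singleton, insert_eq_self.mpr he] at hCsub
  exact ⟨C, hC, heC, hCsub⟩

end AB

/-- In a connected filtration of `M`, each `F_k` is a flat of `M`,
each `F'_k` is a union of circuits of `M`, and `F_c = F_0 = F'_0` is a cyclic flat
(both a flat and a union of circuits). -/
theorem stmt_19 {α : Type*} [LinearOrder α] (M : Matroid α) [M.Finite]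
    (ε ι : ℕ) (F' F : ℕ → Set α) (h : AB.IsConnFiltration M ε ι F' F) :
    (∀ k, k ≤ ι → M.IsFlat (F k)) ∧
    (∀ k, k ≤ ε → ∃ S : Set (Set α), (∀ C ∈ S, AB.Circuit M C) ∧ F' k = ⋃₀ S) ∧
    (M.IsFlat (F 0) ∧ ∃ S : Set (Set α), (∀ C ∈ S, AB.Circuit M C) ∧ F 0 = ⋃₀ S) := by
  obtain ⟨h1, h2, h3, h4, h5, -, -, h8, h9⟩ := h
  have hFmono : ∀ k, k ≤ ι → F k ⊆ M.E := by
    have hchain : ∀ k, k ≤ ι → F k ⊆ F ι :=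
      AB.descend (P := fun k => F k ⊆ F ι) Set.Subset.rfl
        (fun k hk ih => (h4 k hk).subset.trans ih)
    intro k hk
    exact h3 ▸ hchain k hk
  have hF'sub : ∀ k, k ≤ ε → F' k ⊆ F 0 := by
    intro k
    induction k with
    | zero => intro _; exact h2.subset
    | succ k ihk => intro hk; exact (h5 k (by omega)).subset.trans (ihk (by omega))
  have hflat : ∀ k, k ≤ ι → M.IsFlat (F k) := by
    refine AB.descend (P := fun k => M.IsFlat (F k)) (show M.IsFlat (F ι) by rw [h3]; exact M.ground_isFlat)
      (fun k hk ih => ?_)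
    exact AB.flat_step (h4 k hk).subset ih (h8 k hk).1 (h8 k hk).2
      ((h4 k hk).subset.trans (hFmono (k + 1) hk))
  have hF0E : F 0 ⊆ M.E := hFmono 0 (Nat.zero_le _)
  have hcirc : ∀ k, k ≤ ε → ∀ e ∈ F' k, ∃ C, AB.Circuit M C ∧ e ∈ C ∧ C ⊆ F' k := by
    refine AB.descend (P := fun k => ∀ e ∈ F' k, ∃ C, AB.Circuit M C ∧ e ∈ C ∧ C ⊆ F' k)
      ?_ (fun k hk ih => ?_)
    · show ∀ e ∈ F' ε, ∃ C, AB.Circuit M C ∧ e ∈ C ∧ C ⊆ F' ε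
      intro e he
      rw [h1] at he
      exact absurd he (Set.notMem_empty e)
    · exact AB.circuits_step (h5 k hk).subset
        ((hF'sub k (Nat.le_of_lt hk)).trans hF0E) (h9 k hk).1 (h9 k hk).2 ih
  have himp : ∀ k, k ≤ ε → ∃ S : Set (Set α), (∀ C ∈ S, AB.Circuit M C) ∧ F' k = ⋃₀ S := by
    intro k hk
    refine ⟨{C | AB.Circuit M C ∧ C ⊆ F' k}, fun C hC => hC.1, ?_⟩
    apply Set.Subset.antisymm
    · intro e he
      obtain ⟨C, hC, heC, hCs⟩ := hcirc k hk e he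
      exact ⟨C, ⟨hC, hCs⟩, heC⟩
    · intro e he
      obtain ⟨C, hC, heC⟩ := he
      exact hC.2 heC
  refine ⟨hflat, himp, hflat 0 (Nat.zero_le _), ?_⟩
  obtain ⟨S, hS1, hS2⟩ := himp 0 (Nat.zero_le _)
  exact ⟨S, hS1, h2 ▸ hS2⟩
end
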